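/- Let d ≥ 2 and σ_d(x)=d·x on ℝ/ℤ. Suppose B is the convex hull of a finite set of circle points, B is not precritical (no iterate of σ_d identifies two of its vertices), and the interiors of all forward images σ_d^i(B) (convex hulls of the images of the vertex set) are pairwise disjoint. If additionally some σ_d^i(B) and σ_d^j(B) (i < j) share a boundary point v which is a common vertex, then v is preperiodic under σ_d. -/

import Mathlib

open Function

noncomputable section

/-- The circle ℝ/ℤ. -/
abbrev S1 := AddCircle (1 : ℝ)

/-- σ_d : multiplication by d on ℝ/ℤ. -/
def sig (d : ℕ) : S1 → S1 := fun x => d • x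

/-- Two chords of the closed unit disk, with endpoint pairs {a,b} and {c,e}, are linked
(cross in the open unit disk) iff the pairs strictly separate each other on the circle. -/
def Linked (a b c e : S1) : Prop :=
  (sbtw a c b ∧ sbtw b e a) ∨ (sbtw a e b ∧ sbtw b c a)

section Aux


lemma coe_toIcoMod (γ x : ℝ) : ((toIcoMod (zero_lt_one) γ x : ℝ) : S1) = (x : S1) := by
  have : x - toIcoMod zero_lt_one γ x ∈ AddSubgroup.zmultiples (1:ℝ) := by
    rw [← self_sub_toIcoDiv_zsmul zero_lt_one γ x]; simp
  exact ((QuotientAddGroup.eq_iff_sub_mem).2 this).symm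

lemma sbtw_lift {a b c : ℝ} (hab : a < b) (hbc : b < c) (hca : c < a + 1) :
    sbtw (a : S1) (b : S1) (c : S1) := by
  rw [sbtw_iff_btw_not_btw]
  constructor
  · show Btw.btw _ _ _
    rw [show ((a:S1)) = ((a : ℝ) : ℝ ⧸ AddSubgroup.zmultiples (1:ℝ)) from rfl]
    rw [QuotientAddGroup.btw_coe_iff]
    rw [(toIcoMod_eq_self _).2 ⟨hab.le, by linarith⟩,
        (toIocMod_eq_self _).2 ⟨by linarith, by linarith⟩]
    linarith
  · intro h
    rw [show ((c:S1)) = ((c : ℝ) : ℝ ⧸ AddSubgroup.zmultiples (1:ℝ)) from rfl] at h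
    rw [QuotientAddGroup.btw_coe_iff] at h
    rw [show toIcoMod Fact.out c b = b + 1 by
        rw [← toIcoMod_add_right, (toIcoMod_eq_self _).2 ⟨by linarith, by linarith⟩]] at h
    rw [show toIocMod Fact.out c a = a + 1 by
        rw [← toIocMod_add_right, (toIocMod_eq_self _).2 ⟨by linarith, by linarith⟩]] at h
    linarith

lemma coe_add_one (x : ℝ) : ((x + 1 : ℝ) : S1) = (x : S1) := AddCircle.coe_add_period 1 x

/-- strictly between (unordered pair u v) -/
def RBtw (u v w : ℝ) : Prop := (u < w ∧ w < v) ∨ (v < w ∧ w < u)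
/-- strictly outside -/
def ROut (u v w : ℝ) : Prop := (w < u ∧ w < v) ∨ (u < w ∧ v < w)
/-- chords {a,b} and {c,e} strictly cross -/
def RCross (a b c e : ℝ) : Prop :=
  (RBtw a b c ∧ ROut a b e) ∨ (RBtw a b e ∧ ROut a b c)

lemma rcross_swap {a b c e : ℝ} (h : RCross a b c e) : RCross b a c e := by
  unfold RCross RBtw ROut at *; tauto

lemma linked_of_rcross {γ ta tb tc te : ℝ}
    (ha : ta ∈ Set.Ico γ (γ+1)) (hb : tb ∈ Set.Ico γ (γ+1))
    (hc : tc ∈ Set.Ico γ (γ+1)) (he : te ∈ Set.Ico γ (γ+1))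
    (h : RCross ta tb tc te) :
    Linked (ta : S1) (tb : S1) (tc : S1) (te : S1) := by
  obtain ⟨ha0, ha1⟩ := ha; obtain ⟨hb0, hb1⟩ := hb
  obtain ⟨hc0, hc1⟩ := hc; obtain ⟨he0, he1⟩ := he
  rcases h with ⟨hbtw, hout⟩ | ⟨hbtw, hout⟩
  · -- tc between, te outside
    rcases hbtw with ⟨h1, h2⟩ | ⟨h1, h2⟩
    · -- ta < tc < tb
      rcases hout with ⟨h3, h4⟩ | ⟨h3, h4⟩
      · -- te < ta : pattern P4 : disjunct 1
        refine Or.inl ⟨sbtw_lift h1 h2 (by linarith), ?_⟩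
        have : sbtw (tb : S1) ((te + 1 : ℝ) : S1) ((ta + 1 : ℝ) : S1) :=
          sbtw_lift (by linarith) (by linarith) (by linarith)
        rwa [coe_add_one, coe_add_one] at this
      · -- tb < te : pattern P1 : disjunct 1
        refine Or.inl ⟨sbtw_lift h1 h2 (by linarith), ?_⟩
        have : sbtw (tb : S1) (te : S1) ((ta + 1 : ℝ) : S1) :=
          sbtw_lift h4 (by linarith) (by linarith)
        rwa [coe_add_one] at this
    · -- tb < tc < ta
      rcases hout with ⟨h3, h4⟩ | ⟨h3, h4⟩
      · -- te < tb : pattern P8 : disjunct 2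
        refine Or.inr ⟨?_, ?_⟩
        · have : sbtw (ta : S1) ((te + 1 : ℝ) : S1) ((tb + 1 : ℝ) : S1) :=
            sbtw_lift (by linarith) (by linarith) (by linarith)
          rwa [coe_add_one, coe_add_one] at this
        · have : sbtw (tb : S1) (tc : S1) (ta : S1) := sbtw_lift h1 h2 (by linarith)
          exact this
      · -- ta < te : pattern P5 : disjunct 2
        refine Or.inr ⟨?_, sbtw_lift h1 h2 (by linarith)⟩
        have : sbtw (ta : S1) (te : S1) ((tb + 1 : ℝ) : S1) :=
          sbtw_lift h3 (by linarith) (by linarith)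
        rwa [coe_add_one] at this
  · -- te between, tc outside
    rcases hbtw with ⟨h1, h2⟩ | ⟨h1, h2⟩
    · -- ta < te < tb
      rcases hout with ⟨h3, h4⟩ | ⟨h3, h4⟩
      · -- tc < ta : pattern P3 : disjunct 2
        refine Or.inr ⟨sbtw_lift h1 h2 (by linarith), ?_⟩
        have : sbtw (tb : S1) ((tc + 1 : ℝ) : S1) ((ta + 1 : ℝ) : S1) :=
          sbtw_lift (by linarith) (by linarith) (by linarith)
        rwa [coe_add_one, coe_add_one] at this
      · -- tb < tc : pattern P2 : disjunct 2
        refine Or.inr ⟨sbtw_lift h1 h2 (by linarith), ?_⟩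
        have : sbtw (tb : S1) (tc : S1) ((ta + 1 : ℝ) : S1) :=
          sbtw_lift h4 (by linarith) (by linarith)
        rwa [coe_add_one] at this
    · -- tb < te < ta
      rcases hout with ⟨h3, h4⟩ | ⟨h3, h4⟩
      · -- tc < tb : pattern P7 : disjunct 1
        refine Or.inl ⟨?_, sbtw_lift h1 h2 (by linarith)⟩
        have : sbtw (ta : S1) ((tc + 1 : ℝ) : S1) ((tb + 1 : ℝ) : S1) :=
          sbtw_lift (by linarith) (by linarith) (by linarith)
        rwa [coe_add_one, coe_add_one] at this
      · -- ta < tc : pattern P6 : disjunct 1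
        refine Or.inl ⟨?_, sbtw_lift h1 h2 (by linarith)⟩
        have : sbtw (ta : S1) (tc : S1) ((tb + 1 : ℝ) : S1) :=
          sbtw_lift h3 (by linarith) (by linarith)
        rwa [coe_add_one] at this

def Cl (t : ℕ → ℝ) (z : ℝ) : Prop := ∀ ε > 0, ∀ N : ℕ, ∃ n, N ≤ n ∧ |t n - z| < ε

lemma rcross_of_sep {a b c e : ℝ} (ha1 : min c e < a) (ha2 : a < max c e)
    (hb : b < min c e ∨ max c e < b) : RCross a b c e := by
  rcases le_total c e with hce | hce
  · rw [min_eq_left hce] at ha1 hb; rw [max_eq_right hce] at ha2 hb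
    rcases hb with hb | hb
    · exact Or.inl ⟨Or.inr ⟨hb, ha1⟩, Or.inr ⟨by linarith, by linarith⟩⟩
    · exact Or.inr ⟨Or.inl ⟨ha2, hb⟩, Or.inl ⟨by linarith, by linarith⟩⟩
  · rw [min_eq_right hce] at ha1 hb; rw [max_eq_left hce] at ha2 hb
    rcases hb with hb | hb
    · exact Or.inr ⟨Or.inr ⟨hb, ha1⟩, Or.inr ⟨by linarith, by linarith⟩⟩
    · exact Or.inl ⟨Or.inl ⟨ha2, hb⟩, Or.inl ⟨by linarith, by linarith⟩⟩


lemma core (t : ℕ → ℝ) (hinj : Injective t)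
    (hnc : ∀ m n, m ≠ n → ¬ RCross (t m) (t (m+1)) (t n) (t (n+1)))
    (p r q : ℝ) (hpr : p < r) (hrq : r < q)
    (hp : Cl t p) (hr : Cl t r) (hq : Cl t q) : False := by
  classical
  obtain ⟨N₀, hN₀⟩ : ∃ N₀ : ℕ, ∀ n, N₀ ≤ n → t n ≠ p ∧ t n ≠ r ∧ t n ≠ q := by
    have hfin : (t ⁻¹' {p, r, q}).Finite :=
      Set.Finite.preimage hinj.injOn (Set.toFinite _)
    rcases hfin.bddAbove with ⟨N₁, hN₁⟩
    refine ⟨N₁ + 1, fun n hn => ?_⟩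
    have hnot : n ∉ t ⁻¹' {p, r, q} := fun hmem => by
      have := hN₁ hmem; omega
    simp only [Set.mem_preimage, Set.mem_insert_iff, Set.mem_singleton_iff] at hnot
    push_neg at hnot; exact hnot
  -- side constancy
  have side : ∀ n m, n + 2 ≤ m →
      (t m ∈ Set.Ioo (min (t n) (t (n+1))) (max (t n) (t (n+1))) ↔
       t (n+2) ∈ Set.Ioo (min (t n) (t (n+1))) (max (t n) (t (n+1)))) := by
    intro n
    have hout : ∀ w : ℕ, w ≠ n → w ≠ n + 1 →
        t w ∉ Set.Ioo (min (t n) (t (n+1))) (max (t n) (t (n+1))) →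
        t w < min (t n) (t (n+1)) ∨ max (t n) (t (n+1)) < t w := by
      intro w hw1 hw2 hw
      have hne1 : t w ≠ t n := fun h => hw1 (hinj h)
      have hne2 : t w ≠ t (n+1) := fun h => hw2 (hinj h)
      simp only [Set.mem_Ioo, not_and_or, not_lt] at hw
      rcases hw with hw | hw
      · rcases hw.lt_or_eq with h | h
        · exact Or.inl h
        · exfalso
          rcases min_cases (t n) (t (n+1)) with ⟨he, _⟩ | ⟨he, _⟩
          · exact hne1 (h.trans he)
          · exact hne2 (h.trans he)
      · rcases hw.lt_or_eq with h | h
        · exact Or.inr h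
        · exfalso
          rcases max_cases (t n) (t (n+1)) with ⟨he, _⟩ | ⟨he, _⟩
          · exact hne1 (h.symm.trans he)
          · exact hne2 (h.symm.trans he)
    have step : ∀ m, n + 2 ≤ m →
        (t (m+1) ∈ Set.Ioo (min (t n) (t (n+1))) (max (t n) (t (n+1))) ↔
         t m ∈ Set.Ioo (min (t n) (t (n+1))) (max (t n) (t (n+1)))) := by
      intro m hm
      have hmn : m ≠ n := by omega
      constructor
      · intro h1
        by_contra h2
        have h2' := hout m (by omega) (by omega) h2
        exact hnc m n hmn (rcross_swap (rcross_of_sep h1.1 h1.2 h2'))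
      · intro h1
        by_contra h2
        have h2' := hout (m+1) (by omega) (by omega) h2
        exact hnc m n hmn (rcross_of_sep h1.1 h1.2 h2')
    intro m hm
    induction m, hm using Nat.le_induction with
    | base => exact Iff.rfl
    | succ m hm ih => rw [step m hm, ih]
  -- dichotomy
  have dich : ∀ n : ℕ,
      (min (t n) (t (n+1)) ≤ p ∧ q ≤ max (t n) (t (n+1))) ∨
      (∀ z, Cl t z → z ∉ Set.Ioo (min (t n) (t (n+1))) (max (t n) (t (n+1)))) := by
    intro n
    by_cases hIn : t (n+2) ∈ Set.Ioo (min (t n) (t (n+1))) (max (t n) (t (n+1)))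
    · left
      constructor
      · by_contra hcon
        push_neg at hcon
        obtain ⟨m, hm, hmp⟩ := hp (min (t n) (t (n+1)) - p) (by linarith) (n+2)
        have hmem : t m ∈ Set.Ioo (min (t n) (t (n+1))) (max (t n) (t (n+1))) :=
          (side n m hm).2 hIn
        have habs := abs_lt.1 hmp
        linarith [hmem.1, habs.2]
      · by_contra hcon
        push_neg at hcon
        obtain ⟨m, hm, hmq⟩ := hq (q - max (t n) (t (n+1))) (by linarith) (n+2)
        have hmem : t m ∈ Set.Ioo (min (t n) (t (n+1))) (max (t n) (t (n+1))) :=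
          (side n m hm).2 hIn
        have habs := abs_lt.1 hmq
        linarith [hmem.2, habs.1]
    · right
      intro z hz hzin
      obtain ⟨m, hm, hmz⟩ := hz
        (min (z - min (t n) (t (n+1))) (max (t n) (t (n+1)) - z))
        (lt_min_iff.2 ⟨by linarith [hzin.1], by linarith [hzin.2]⟩) (n+2)
      have habs := abs_lt.1 hmz
      have e1 := min_le_left (z - min (t n) (t (n+1))) (max (t n) (t (n+1)) - z)
      have e2 := min_le_right (z - min (t n) (t (n+1))) (max (t n) (t (n+1)) - z)
      have hmem : t m ∈ Set.Ioo (min (t n) (t (n+1))) (max (t n) (t (n+1))) :=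
        ⟨by linarith [habs.1], by linarith [habs.2]⟩
      exact hIn ((side n m hm).1 hmem)
  -- transitions
  have trans1 : ∀ n, N₀ ≤ n → t n ∈ Set.Ioo p r → t (n+1) ∈ Set.Ioo p r := by
    intro n hn hmem
    obtain ⟨hm1, hm2, hm3⟩ := hN₀ (n+1) (by omega)
    rcases dich n with ⟨hd1, hd2⟩ | hd
    · exfalso
      rcases le_total (t n) (t (n+1)) with h | h
      · rw [min_eq_left h] at hd1; linarith [hmem.1]
      · rw [max_eq_left h] at hd2; linarith [hmem.2]
    · constructor
      · by_contra hcon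
        push_neg at hcon
        have hlt : t (n+1) < p := lt_of_le_of_ne hcon hm1
        exact hd p hp ⟨lt_of_le_of_lt (min_le_right _ _) hlt,
          lt_of_lt_of_le hmem.1 (le_max_left _ _)⟩
      · by_contra hcon
        push_neg at hcon
        have hlt : r < t (n+1) := lt_of_le_of_ne hcon (Ne.symm hm2)
        exact hd r hr ⟨lt_of_le_of_lt (min_le_left _ _) hmem.2,
          lt_of_lt_of_le hlt (le_max_right _ _)⟩
  have trans2 : ∀ n, N₀ ≤ n → t n ∈ Set.Ioo r q → t (n+1) ∈ Set.Ioo r q := by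
    intro n hn hmem
    obtain ⟨hm1, hm2, hm3⟩ := hN₀ (n+1) (by omega)
    rcases dich n with ⟨hd1, hd2⟩ | hd
    · exfalso
      rcases le_total (t n) (t (n+1)) with h | h
      · rw [min_eq_left h] at hd1; linarith [hmem.1]
      · rw [max_eq_left h] at hd2; linarith [hmem.2]
    · constructor
      · by_contra hcon
        push_neg at hcon
        have hlt : t (n+1) < r := lt_of_le_of_ne hcon hm2
        exact hd r hr ⟨lt_of_le_of_lt (min_le_right _ _) hlt,
          lt_of_lt_of_le hmem.1 (le_max_left _ _)⟩
      · by_contra hcon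
        push_neg at hcon
        have hlt : q < t (n+1) := lt_of_le_of_ne hcon (Ne.symm hm3)
        exact hd q hq ⟨lt_of_le_of_lt (min_le_left _ _) hmem.2,
          lt_of_lt_of_le hlt (le_max_right _ _)⟩
  have trans3 : ∀ n, N₀ ≤ n → t n < p → (t (n+1) < p ∨ q < t (n+1)) := by
    intro n hn hlt
    obtain ⟨hm1, hm2, hm3⟩ := hN₀ (n+1) (by omega)
    rcases dich n with ⟨hd1, hd2⟩ | hd
    · rcases le_total (t n) (t (n+1)) with h | h
      · rw [max_eq_right h] at hd2
        exact Or.inr (lt_of_le_of_ne hd2 (Ne.symm hm3))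
      · rw [max_eq_left h] at hd2; exfalso; linarith
    · left
      by_contra hcon
      push_neg at hcon
      have : p < t (n+1) := lt_of_le_of_ne hcon (Ne.symm hm1)
      exact hd p hp ⟨lt_of_le_of_lt (min_le_left _ _) hlt,
        lt_of_lt_of_le this (le_max_right _ _)⟩
  have trans4 : ∀ n, N₀ ≤ n → q < t n → (q < t (n+1) ∨ t (n+1) < p) := by
    intro n hn hlt
    obtain ⟨hm1, hm2, hm3⟩ := hN₀ (n+1) (by omega)
    rcases dich n with ⟨hd1, hd2⟩ | hd
    · rcases le_total (t n) (t (n+1)) with h | h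
      · rw [min_eq_left h] at hd1; exfalso; linarith
      · rw [min_eq_right h] at hd1
        exact Or.inr (lt_of_le_of_ne hd1 hm1)
    · left
      by_contra hcon
      push_neg at hcon
      have : t (n+1) < q := lt_of_le_of_ne hcon hm3
      exact hd q hq ⟨lt_of_le_of_lt (min_le_right _ _) this,
        lt_of_lt_of_le hlt (le_max_left _ _)⟩
  -- conclusion
  obtain ⟨n₀, hn₀N, hn₀r⟩ := hr (min (r - p) (q - r)) (lt_min_iff.2 ⟨by linarith, by linarith⟩) N₀
  have habs := abs_lt.1 hn₀r
  have e1 := min_le_left (r - p) (q - r)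
  have e2 := min_le_right (r - p) (q - r)
  have hne := (hN₀ n₀ hn₀N).2.1
  rcases lt_or_gt_of_ne hne with hcase | hcase
  · -- t n₀ ∈ (p, r)
    have stay : ∀ k, t (n₀ + k) ∈ Set.Ioo p r := by
      intro k
      induction k with
      | zero => simp only [Nat.add_zero]; exact ⟨by linarith [habs.1], hcase⟩
      | succ k ih => exact trans1 (n₀ + k) (by omega) ih
    obtain ⟨m, hm, hmq⟩ := hq (q - r) (by linarith) n₀
    have hmem : t m ∈ Set.Ioo p r := by
      have := stay (m - n₀)
      rwa [Nat.add_sub_cancel' hm] at this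
    have := abs_lt.1 hmq
    linarith [hmem.2]
  · -- t n₀ ∈ (r, q)
    have stay : ∀ k, t (n₀ + k) ∈ Set.Ioo r q := by
      intro k
      induction k with
      | zero => simp only [Nat.add_zero]; exact ⟨hcase, by linarith [habs.2]⟩
      | succ k ih => exact trans2 (n₀ + k) (by omega) ih
    obtain ⟨m, hm, hmp⟩ := hp (r - p) (by linarith) n₀
    have hmem : t m ∈ Set.Ioo r q := by
      have := stay (m - n₀)
      rwa [Nat.add_sub_cancel' hm] at this
    have := abs_lt.1 hmp
    linarith [hmem.1]

/-- Bolzano–Weierstrass along an infinite set of indices. -/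
lemma bw_subset (t : ℕ → ℝ) (B1 B2 : ℝ) (hb : ∀ n, t n ∈ Set.Icc B1 B2)
    (S : Set ℕ) (hS : S.Infinite) :
    ∃ z, Cl t z ∧ ∀ ε > 0, ∀ N : ℕ, ∃ n, n ∈ S ∧ N ≤ n ∧ |t n - z| < ε := by
  classical
  have hS' : {n | n ∈ S}.Infinite := hS
  set e : ℕ → ℕ := Nat.nth (· ∈ S) with he
  have hmem : ∀ k, e k ∈ S := fun k => Nat.nth_mem_of_infinite hS' k
  have hmono : StrictMono e := Nat.nth_strictMono hS'
  obtain ⟨z, hzmem, φ, hφ, hlim⟩ :=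
    (isCompact_Icc (a := B1) (b := B2)).tendsto_subseq (fun k => hb (e k))
  have key : ∀ ε > 0, ∀ N : ℕ, ∃ n, n ∈ S ∧ N ≤ n ∧ |t n - z| < ε := by
    intro ε hε N
    have := Metric.tendsto_atTop.1 hlim ε hε
    obtain ⟨K, hK⟩ := this
    refine ⟨e (φ (max K N)), hmem _, ?_, ?_⟩
    · calc N ≤ max K N := le_max_right _ _
        _ ≤ φ (max K N) := hφ.le_apply
        _ ≤ e (φ (max K N)) := hmono.le_apply
    · have := hK (max K N) (le_max_left _ _)
      rwa [Real.dist_eq] at this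
  exact ⟨z, fun ε hε N => (key ε hε N).imp (fun n h => ⟨h.2.1, h.2.2⟩), key⟩

/-- sorting wrapper for core -/
lemma core' (t : ℕ → ℝ) (hinj : Function.Injective t)
    (hnc : ∀ m n, m ≠ n → ¬ RCross (t m) (t (m+1)) (t n) (t (n+1)))
    (a b c : ℝ) (hab : a ≠ b) (hac : a ≠ c) (hbc : b ≠ c)
    (ha : Cl t a) (hb : Cl t b) (hc : Cl t c) : False := by
  rcases lt_trichotomy a b with h1 | h1 | h1
  · rcases lt_trichotomy b c with h2 | h2 | h2
    · exact core t hinj hnc a b c h1 h2 ha hb hc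
    · exact hbc h2
    · rcases lt_trichotomy a c with h3 | h3 | h3
      · exact core t hinj hnc a c b h3 h2 ha hc hb
      · exact hac h3
      · exact core t hinj hnc c a b h3 h1 hc ha hb
  · exact hab h1
  · rcases lt_trichotomy a c with h2 | h2 | h2
    · exact core t hinj hnc b a c h1 h2 hb ha hc
    · exact hac h2
    · rcases lt_trichotomy b c with h3 | h3 | h3
      · exact core t hinj hnc b c a h3 h2 hb hc ha
      · exact hbc h3
      · exact core t hinj hnc c b a h3 h1 hc hb ha

lemma two_clusters (t : ℕ → ℝ) (B1 B2 : ℝ) (hb : ∀ n, t n ∈ Set.Icc B1 B2)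
    (hinj : Function.Injective t)
    (hnc : ∀ m n, m ≠ n → ¬ RCross (t m) (t (m+1)) (t n) (t (n+1))) :
    ∃ p q, Cl t p ∧ Cl t q ∧
      ∀ ε > 0, ∃ N : ℕ, ∀ n, N ≤ n → |t n - p| < ε ∨ |t n - q| < ε := by
  classical
  obtain ⟨p, hp, -⟩ := bw_subset t B1 B2 hb Set.univ Set.infinite_univ
  by_cases hq : ∃ q, Cl t q ∧ q ≠ p
  · obtain ⟨q, hq, hqp⟩ := hq
    refine ⟨p, q, hp, hq, ?_⟩
    by_contra hcon
    push_neg at hcon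
    obtain ⟨ε, hε, hbad⟩ := hcon
    have hSinf : {n | ε ≤ |t n - p| ∧ ε ≤ |t n - q|}.Infinite := by
      apply Set.infinite_of_forall_exists_gt
      intro a
      obtain ⟨n, hn, h1, h2⟩ := hbad (a+1)
      exact ⟨n, ⟨h1, h2⟩, by omega⟩
    obtain ⟨z, hz, hzkey⟩ := bw_subset t B1 B2 hb _ hSinf
    obtain ⟨n, hnS, -, hnz⟩ := hzkey (ε/2) (by linarith) 0
    have hzp : z ≠ p := by
      intro h; subst h
      have := hnS.1
      have := abs_lt.1 hnz
      linarith [hnS.1]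
    have hzq : z ≠ q := by
      intro h; subst h
      have := abs_lt.1 hnz
      linarith [hnS.2]
    exact core' t hinj hnc p q z (Ne.symm hqp) (Ne.symm hzp) (Ne.symm hzq) hp hq hz
  · push_neg at hq
    refine ⟨p, p, hp, hp, ?_⟩
    by_contra hcon
    push_neg at hcon
    obtain ⟨ε, hε, hbad⟩ := hcon
    have hSinf : {n | ε ≤ |t n - p|}.Infinite := by
      apply Set.infinite_of_forall_exists_gt
      intro a
      obtain ⟨n, hn, h1, h2⟩ := hbad (a+1)
      exact ⟨n, h1, by omega⟩
    obtain ⟨z, hz, hzkey⟩ := bw_subset t B1 B2 hb _ hSinf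
    obtain ⟨n, hnS, -, hnz⟩ := hzkey (ε/2) (by linarith) 0
    have hzp : z ≠ p := by
      intro h; subst h
      have := abs_lt.1 hnz
      linarith [Set.mem_setOf_eq ▸ hnS]
    exact hzp (hq z hz)


lemma s1_norm_coe (x : ℝ) : ‖(x : S1)‖ = |x - round x| := by
  rw [AddCircle.norm_eq]; norm_num

lemma s1_norm_coe_of_le {x : ℝ} (h : |x| ≤ 1/2) : ‖(x : S1)‖ = |x| := by
  rw [s1_norm_coe]
  rcases eq_or_lt_of_le (abs_le.1 h).2 with h2 | h2
  · subst h2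
    rw [round_eq]
    norm_num
  · have : round x = 0 := round_eq_zero_iff.2 ⟨(abs_le.1 h).1, h2⟩
    rw [this]; norm_num

lemma s1_norm_coe_le (x : ℝ) : ‖(x : S1)‖ ≤ |x| := by
  rcases le_total (|x|) (1/2) with h | h
  · rw [s1_norm_coe_of_le h]
  · rw [s1_norm_coe]
    calc |x - round x| ≤ 1/2 := abs_sub_round x
      _ ≤ |x| := h

lemma s1_coe_sub (a b : ℝ) : ((a - b : ℝ) : S1) = (a : S1) - (b : S1) := rfl

lemma s1_dist_coe_le (a b : ℝ) : dist (a : S1) (b : S1) ≤ |a - b| := by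
  rw [dist_eq_norm, ← s1_coe_sub]; exact s1_norm_coe_le _

lemma s1_exists_rep (u : S1) : ∃ y : ℝ, (y : S1) = u ∧ |y| = ‖u‖ ∧ |y| ≤ 1/2 := by
  obtain ⟨y₀, rfl⟩ := QuotientAddGroup.mk_surjective u
  refine ⟨y₀ - round y₀, ?_, ?_, abs_sub_round y₀⟩
  · have h0 : ((round y₀ : ℝ) : S1) = 0 := by
      rw [QuotientAddGroup.eq_zero_iff]
      exact ⟨round y₀, by simp⟩
    rw [s1_coe_sub, h0, sub_zero]
  · exact (s1_norm_coe y₀).symm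

lemma s1_dist_nsmul_le (D : ℕ) (z w : S1) : dist (D • z) (D • w) ≤ D * dist z w := by
  rw [dist_eq_norm, dist_eq_norm, ← smul_sub]
  exact norm_nsmul_le

lemma s1_coe_nsmul (D : ℕ) (y : ℝ) : D • (y : S1) = (((D:ℝ) * y : ℝ) : S1) := by
  have : ((D • y : ℝ) : S1) = D • (y : S1) := rfl
  rw [← this, nsmul_eq_mul]

lemma s1_dist_nsmul_eq (D : ℕ) (hD : 0 < D) (z w : S1)
    (h : dist z w ≤ 1/(2*D)) : dist (D • z) (D • w) = D * dist z w := by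
  obtain ⟨y, hy, hynorm, hyle⟩ := s1_exists_rep (z - w)
  have hDpos : (0:ℝ) < D := by exact_mod_cast hD
  have hyb : |y| ≤ 1/(2*D) := by
    rw [hynorm, ← dist_eq_norm]; exact h
  have hDy : |(D:ℝ) * y| ≤ 1/2 := by
    rw [abs_mul, abs_of_nonneg hDpos.le]
    have h2 : (D:ℝ) * |y| ≤ D * (1/(2*D)) := by nlinarith [abs_nonneg y]
    have h3 : (D:ℝ) * (1/(2*D)) = 1/2 := by field_simp
    linarith
  rw [dist_eq_norm, dist_eq_norm, ← smul_sub, ← hy, s1_coe_nsmul,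
    s1_norm_coe_of_le hDy, s1_norm_coe_of_le hyle, abs_mul, abs_of_nonneg hDpos.le]

lemma expansion (D : ℕ) (hD : 2 ≤ D) (x : ℕ → S1) (hiter : ∀ n, x (n+1) = D • x n)
    (hinj : Injective x) (P Q : S1)
    (hP : D • P = P ∨ D • P = Q) (hQ : D • Q = P ∨ D • Q = Q)
    (hnear : ∀ ε > 0, ∃ N, ∀ n, N ≤ n → dist (x n) P < ε ∨ dist (x n) Q < ε) :
    False := by
  classical
  have hDpos : (0:ℝ) < D := by positivity
  have hD1 : (1:ℝ) < D := by exact_mod_cast hD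
  obtain ⟨γ, hγpos, hγeq⟩ : ∃ γ : ℝ, 0 < γ ∧ (P ≠ Q → γ = dist P Q) := by
    by_cases hPQ : P = Q
    · exact ⟨1, one_pos, fun h => absurd hPQ h⟩
    · exact ⟨dist P Q, dist_pos.2 hPQ, fun _ => rfl⟩
  obtain ⟨ε, hεpos, hεle1, hεle2⟩ :
      ∃ ε : ℝ, 0 < ε ∧ ε ≤ γ/(D+1) ∧ ε ≤ 1/(2*D) :=
    ⟨min (γ/(D+1)) (1/(2*D)), lt_min (by positivity) (by positivity),
      min_le_left _ _, min_le_right _ _⟩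
  obtain ⟨N, hN⟩ := hnear ε hεpos
  have hrlt : ∀ n, N ≤ n → min (dist (x n) P) (dist (x n) Q) < ε := by
    intro n hn
    rcases hN n hn with h | h
    · exact lt_of_le_of_lt (min_le_left _ _) h
    · exact lt_of_le_of_lt (min_le_right _ _) h
  have hrnonneg : ∀ n, (0:ℝ) ≤ min (dist (x n) P) (dist (x n) Q) :=
    fun n => le_min dist_nonneg dist_nonneg
  have hmem_step : ∀ m, x m ∈ ({P, Q} : Set S1) → x (m+1) ∈ ({P, Q} : Set S1) := by
    intro m hm
    simp only [Set.mem_insert_iff, Set.mem_singleton_iff] at hm ⊢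
    rcases hm with hm | hm
    · rw [hiter m, hm]; exact hP
    · rw [hiter m, hm]; exact hQ
  have hmem_elim : ∀ n, x n ∈ ({P, Q} : Set S1) → False := by
    intro n hn
    have h1 := hmem_step n hn
    have h2 := hmem_step (n+1) h1
    have ne01 : x n ≠ x (n+1) := fun h => by have := hinj h; omega
    have ne02 : x n ≠ x (n+2) := fun h => by have := hinj h; omega
    have ne12 : x (n+1) ≠ x (n+2) := fun h => by have := hinj h; omega
    simp only [Set.mem_insert_iff, Set.mem_singleton_iff] at hn h1 h2
    rcases hn with h | h <;> rcases h1 with h' | h' <;> rcases h2 with h'' | h'' <;>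
      simp_all
  have hrpos : ∀ n, (0:ℝ) < min (dist (x n) P) (dist (x n) Q) := by
    intro n
    rcases (hrnonneg n).lt_or_eq with h | h
    · exact h
    · exfalso
      apply hmem_elim n
      rcases min_cases (dist (x n) P) (dist (x n) Q) with ⟨he, -⟩ | ⟨he, -⟩
      · exact Or.inl (dist_eq_zero.1 (by rw [he] at h; exact h.symm))
      · exact Or.inr (dist_eq_zero.1 (by rw [he] at h; exact h.symm))
  -- expansion step
  have hstep : ∀ n, N ≤ n →
      (D:ℝ) * min (dist (x n) P) (dist (x n) Q)
        ≤ min (dist (x (n+1)) P) (dist (x (n+1)) Q) := by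
    intro n hn
    obtain ⟨lam, hlam, hrdist⟩ :
        ∃ lam : S1, (lam = P ∨ lam = Q) ∧
          min (dist (x n) P) (dist (x n) Q) = dist (x n) lam := by
      rcases min_cases (dist (x n) P) (dist (x n) Q) with ⟨he, -⟩ | ⟨he, -⟩
      · exact ⟨P, Or.inl rfl, he⟩
      · exact ⟨Q, Or.inr rfl, he⟩
    have hDlam : D • lam = P ∨ D • lam = Q := by
      rcases hlam with h | h <;> rw [h]
      · exact hP
      · exact hQ
    have hstep1 : dist (x (n+1)) (D • lam) =
        D * min (dist (x n) P) (dist (x n) Q) := by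
      rw [hiter n, s1_dist_nsmul_eq D (by omega) _ _
        (by rw [← hrdist]; exact (hrlt n hn).le.trans hεle2), hrdist]
    -- any other special point is far from x (n+1)
    have hfar : ∀ w : S1, (w = P ∨ w = Q) → w ≠ D • lam →
        ε ≤ dist (x (n+1)) w := by
      intro w hw hwne
      have hPQ : P ≠ Q := by
        intro hpq
        apply hwne
        rcases hw with h | h <;> rcases hDlam with h' | h' <;> simp [h, h', hpq]
      have hwD : dist w (D • lam) = γ := by
        rw [hγeq hPQ]
        rcases hw with h | h <;> rcases hDlam with h' | h'
        · exact absurd (h.trans h'.symm) hwne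
        · rw [h, h']
        · rw [h, h', dist_comm]
        · exact absurd (h.trans h'.symm) hwne
      have htri : dist w (D • lam) ≤ dist (x (n+1)) w + dist (x (n+1)) (D • lam) :=
        dist_triangle_left _ _ _
      have hDr : dist (x (n+1)) (D • lam) < D * ε := by
        rw [hstep1]
        have := hrlt n hn
        nlinarith
      have hkey : (D:ℝ) * ε + ε ≤ γ := by
        have h1 : ε * (D + 1) ≤ γ := by
          have := mul_le_mul_of_nonneg_right hεle1 (by positivity : (0:ℝ) ≤ D + 1)
          calc ε * (D+1) ≤ (γ/(D+1)) * (D+1) := this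
            _ = γ := by field_simp
        nlinarith
      linarith
    -- conclude
    rcases hDlam with hcase | hcase
    · -- D • lam = P
      by_cases hQD : Q = D • lam
      · have : dist (x (n+1)) P = dist (x (n+1)) (D • lam) := by rw [hcase]
        have hq' : dist (x (n+1)) Q = dist (x (n+1)) (D • lam) := by rw [← hQD]
        rw [this, hq', min_self, hstep1]
      · rcases min_cases (dist (x (n+1)) P) (dist (x (n+1)) Q) with ⟨he, -⟩ | ⟨he, hle⟩
        · rw [he]; exact le_of_eq (by rw [← hstep1, hcase])
        · exfalso
          have h1 : ε ≤ dist (x (n+1)) Q := hfar Q (Or.inr rfl) hQD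
          have h2 := hrlt (n+1) (by omega)
          rw [he] at h2
          linarith
    · -- D • lam = Q
      by_cases hPD : P = D • lam
      · have : dist (x (n+1)) Q = dist (x (n+1)) (D • lam) := by rw [hcase]
        have hp' : dist (x (n+1)) P = dist (x (n+1)) (D • lam) := by rw [← hPD]
        rw [this, hp', min_self, hstep1]
      · rcases min_cases (dist (x (n+1)) P) (dist (x (n+1)) Q) with ⟨he, hle⟩ | ⟨he, -⟩
        · exfalso
          have h1 : ε ≤ dist (x (n+1)) P := hfar P (Or.inl rfl) hPD
          have h2 := hrlt (n+1) (by omega)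
          rw [he] at h2
          linarith
        · rw [he]; exact le_of_eq (by rw [← hstep1, hcase])
  -- geometric growth
  have hgrow : ∀ k, (D:ℝ)^k * min (dist (x N) P) (dist (x N) Q)
      ≤ min (dist (x (N+k)) P) (dist (x (N+k)) Q) := by
    intro k
    induction k with
    | zero => simp
    | succ k ih =>
      have h1 := hstep (N + k) (by omega)
      calc (D:ℝ)^(k+1) * min (dist (x N) P) (dist (x N) Q)
          = D * ((D:ℝ)^k * min (dist (x N) P) (dist (x N) Q)) := by ring
        _ ≤ D * min (dist (x (N+k)) P) (dist (x (N+k)) Q) := by nlinarith [hrnonneg (N+k)]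
        _ ≤ min (dist (x (N+k+1)) P) (dist (x (N+k+1)) Q) := h1
  obtain ⟨k, hk⟩ := pow_unbounded_of_one_lt
    (ε / min (dist (x N) P) (dist (x N) Q)) hD1
  have hlt : ε < (D:ℝ)^k * min (dist (x N) P) (dist (x N) Q) := by
    rw [div_lt_iff₀ (hrpos N)] at hk
    linarith
  have h1 := hgrow k
  have h2 := hrlt (N + k) (by omega)
  linarith

lemma main_lemma (D : ℕ) (hD : 2 ≤ D) (x : ℕ → S1) (hiter : ∀ n, x (n+1) = D • x n)
    (hinj : Injective x)
    (hU : ∀ m n : ℕ, m ≠ n → ¬ Linked (x (m+1)) (x (m+2)) (x (n+1)) (x (n+2))) : False := by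
  classical
  have hDpos : (0:ℝ) < D := by
    have : (2:ℝ) ≤ D := by exact_mod_cast hD
    linarith
  obtain ⟨γ, hγ⟩ := QuotientAddGroup.mk_surjective (x 0)
  have hrep : ∀ n : ℕ, ∃ y : ℝ, (y : S1) = x (n+1) :=
    fun n => QuotientAddGroup.mk_surjective (x (n+1))
  choose y hy using hrep
  have hcoe : ∀ n, ((toIcoMod zero_lt_one γ (y n) : ℝ) : S1) = x (n+1) :=
    fun n => (coe_toIcoMod γ (y n)).trans (hy n)
  set t : ℕ → ℝ := fun n => toIcoMod zero_lt_one γ (y n) with ht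
  have hcoe' : ∀ n, ((t n : ℝ) : S1) = x (n+1) := hcoe
  have hmem : ∀ n, t n ∈ Set.Ico γ (γ+1) := fun n => toIcoMod_mem_Ico zero_lt_one γ (y n)
  have tinj : Injective t := by
    intro a b hab
    have hxx : x (a+1) = x (b+1) := by rw [← hcoe' a, ← hcoe' b, hab]
    have := hinj hxx; omega
  have hnc : ∀ m n, m ≠ n → ¬ RCross (t m) (t (m+1)) (t n) (t (n+1)) := by
    intro m n hmn hcr
    apply hU m n hmn
    rw [← hcoe' m, ← hcoe' (m+1), ← hcoe' n, ← hcoe' (n+1)]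
    exact linked_of_rcross (hmem m) (hmem (m+1)) (hmem n) (hmem (n+1)) hcr
  obtain ⟨p, q, hp, hq, hnear⟩ := two_clusters t γ (γ+1)
    (fun n => ⟨(hmem n).1, (hmem n).2.le⟩) tinj hnc
  have hdistp : ∀ n, dist (x (n+1)) ((p : ℝ) : S1) ≤ |t n - p| := by
    intro n; rw [← hcoe' n]; exact s1_dist_coe_le _ _
  have hdistq : ∀ n, dist (x (n+1)) ((q : ℝ) : S1) ≤ |t n - q| := by
    intro n; rw [← hcoe' n]; exact s1_dist_coe_le _ _
  have hnear' : ∀ ε > 0, ∃ N, ∀ n, N ≤ n →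
      dist (x n) ((p:ℝ):S1) < ε ∨ dist (x n) ((q:ℝ):S1) < ε := by
    intro ε hε
    obtain ⟨N, hN⟩ := hnear ε hε
    refine ⟨N+1, fun n hn => ?_⟩
    obtain ⟨m, rfl⟩ : ∃ m, n = m + 1 := ⟨n - 1, by omega⟩
    rcases hN m (by omega) with h | h
    · exact Or.inl (lt_of_le_of_lt (hdistp m) h)
    · exact Or.inr (lt_of_le_of_lt (hdistq m) h)
  have hinv : ∀ z : ℝ, Cl t z →
      (D • ((z:ℝ):S1) = ((p:ℝ):S1) ∨ D • ((z:ℝ):S1) = ((q:ℝ):S1)) := by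
    intro z hz
    by_contra hcon
    push_neg at hcon
    obtain ⟨h1, h2⟩ := hcon
    have hδpos : 0 < min (dist (D • ((z:ℝ):S1)) ((p:ℝ):S1)) (dist (D • ((z:ℝ):S1)) ((q:ℝ):S1)) :=
      lt_min (dist_pos.2 h1) (dist_pos.2 h2)
    obtain ⟨δ, hδ, hδp, hδq⟩ :
        ∃ δ : ℝ, 0 < δ ∧ δ ≤ dist (D • ((z:ℝ):S1)) ((p:ℝ):S1) ∧
          δ ≤ dist (D • ((z:ℝ):S1)) ((q:ℝ):S1) :=
      ⟨_, hδpos, min_le_left _ _, min_le_right _ _⟩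
    obtain ⟨N, hN⟩ := hnear' (δ/3) (by positivity)
    obtain ⟨n, hn, hnz⟩ := hz (δ/(3*D)) (by positivity) N
    have hd1 : dist (x (n+1)) ((z:ℝ):S1) ≤ |t n - z| := by
      rw [← hcoe' n]; exact s1_dist_coe_le _ _
    have hd2 : dist (x (n+2)) (D • ((z:ℝ):S1)) ≤ D * dist (x (n+1)) ((z:ℝ):S1) := by
      rw [hiter (n+1)]; exact s1_dist_nsmul_le D _ _
    have hd3 : dist (x (n+2)) (D • ((z:ℝ):S1)) < δ/3 := by
      have : (D:ℝ) * (δ/(3*D)) = δ/3 := by field_simp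
      calc dist (x (n+2)) (D • ((z:ℝ):S1)) ≤ D * dist (x (n+1)) ((z:ℝ):S1) := hd2
        _ ≤ D * |t n - z| := by nlinarith [hd1, dist_nonneg.trans hd1]
        _ < D * (δ/(3*D)) := by nlinarith [hnz]
        _ = δ/3 := this
    rcases hN (n+2) (by omega) with h | h
    · have := dist_triangle_left (D • ((z:ℝ):S1)) ((p:ℝ):S1) (x (n+2))
      linarith [hδp]
    · have := dist_triangle_left (D • ((z:ℝ):S1)) ((q:ℝ):S1) (x (n+2))
      linarith [hδq]
  exact expansion D hD x hiter hinj ((p:ℝ):S1) ((q:ℝ):S1) (hinv p hp) (hinv q hq) hnear'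

end Aux


/-- If B is the convex hull of a finite non-precritical circle set V whose forward
images have pairwise disjoint interiors (pairwise unlinked chords), and two forward
images share a vertex v, then v is preperiodic. -/
theorem stmt19 (d : ℕ) (hd : 2 ≤ d) (V : Set S1) (hfin : V.Finite)
    (hnc : ∀ u ∈ V, ∀ w ∈ V, u ≠ w → ∀ k : ℕ, (sig d)^[k] u ≠ (sig d)^[k] w)
    (hdisj : ∀ i j : ℕ, i ≠ j →
      ∀ p ∈ (sig d)^[i] '' V, ∀ q ∈ (sig d)^[i] '' V,
      ∀ r ∈ (sig d)^[j] '' V, ∀ s ∈ (sig d)^[j] '' V, ¬ Linked p q r s)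
    (i j : ℕ) (hij : i < j) (v : S1)
    (hv : v ∈ (sig d)^[i] '' V ∩ (sig d)^[j] '' V) :
    ∃ m k : ℕ, 0 < k ∧ (sig d)^[m + k] v = (sig d)^[m] v := by
  classical
  obtain ⟨⟨u, hu, huv⟩, ⟨w, hw, hwv⟩⟩ := hv
  set g := j - i with hg
  have hg1 : 1 ≤ g := by omega
  have hgij : i + g = j := by omega
  have hsig_it : ∀ (k : ℕ) (z : S1), (sig d)^[k] z = d^k • z := by
    intro k
    induction k with
    | zero => intro z; simp
    | succ k ih =>
      intro z
      rw [Function.iterate_succ_apply', ih]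
      show d • (d^k • z) = d^(k+1) • z
      rw [smul_smul, ← pow_succ']
  set x : ℕ → S1 := fun n => (sig d)^[g * n] v with hx
  by_cases hcol : ∃ a b : ℕ, a < b ∧ x a = x b
  · obtain ⟨a, b, hab, hcoleq⟩ := hcol
    refine ⟨g * a, g * (b - a), ?_, ?_⟩
    · have h1 : 1 * 1 ≤ g * (b - a) := Nat.mul_le_mul hg1 (by omega)
      omega
    · have he : g * a + g * (b - a) = g * b := by
        rw [← Nat.mul_add]
        congr 1
        omega
      rw [he]
      exact hcoleq.symm
  · push_neg at hcol
    have hinjx : Injective x := by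
      intro a b hab
      by_contra hne
      rcases Nat.lt_or_ge a b with h | h
      · exact hcol a b h hab
      · have h' : b < a := by omega
        exact hcol b a h' hab.symm
    have hD : 2 ≤ d ^ g :=
      le_trans hd (Nat.le_self_pow (by omega) d)
    have hiter : ∀ n, x (n+1) = d ^ g • x n := by
      intro n
      show (sig d)^[g * (n+1)] v = d ^ g • (sig d)^[g * n] v
      have he : g * (n + 1) = g + g * n := by
        rw [Nat.mul_succ]; omega
      rw [he, Function.iterate_add_apply, hsig_it]
    have hU : ∀ m n : ℕ, m ≠ n → ¬ Linked (x (m+1)) (x (m+2)) (x (n+1)) (x (n+2)) := by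
      intro m n hmn
      have hKmem : ∀ m : ℕ, x (m+1) ∈ (sig d)^[g * (m+1) + j] '' V ∧
          x (m+2) ∈ (sig d)^[g * (m+1) + j] '' V := by
        intro m
        constructor
        · refine ⟨w, hw, ?_⟩
          rw [Function.iterate_add_apply, hwv]
        · refine ⟨u, hu, ?_⟩
          have he : g * (m+1) + j = g * (m + 2) + i := by
            have h2 : g * (m + 2) = g * (m+1) + g := by rw [Nat.mul_succ]
            omega
          rw [he, Function.iterate_add_apply, huv]
      have hne : g * (m+1) + j ≠ g * (n+1) + j := by
        intro hcontra
        have : g * (m+1) = g * (n+1) := by omega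
        have := Nat.eq_of_mul_eq_mul_left (by omega : 0 < g) this
        omega
      exact hdisj (g * (m+1) + j) (g * (n+1) + j) hne
        (x (m+1)) (hKmem m).1 (x (m+2)) (hKmem m).2
        (x (n+1)) (hKmem n).1 (x (n+2)) (hKmem n).2
    exact absurd (main_lemma (d ^ g) hD x hiter hinjx hU) id
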